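/- arXiv:1111.1786 — 3 statements merged into one kernel-verified Lean document; each statement's English description precedes it below -/
import Mathlib

section
/- Let {Y_j} be a sequence of independent Gaussian random variables with Y_j ~ N(0, σ_j²) such that σ² := lim_{n→∞} (1/n) Σ_{j=1}^n σ_j² exists and is strictly positive, and let {a_j} be a sequence of real numbers such that a := lim_{n→∞} (1/n) Σ_{j=1}^n a_j exists. Then for every t ∈ ℝ, lim_{p→0⁺} Σ_{n=1}^∞ (1-p)^{n-1} p · E[exp(i t (p^{1/2} S_n + p b_n))] = 1 / (1 - i a t + σ² t² / 2), where S_n = Σ_{j=1}^n Y_j and b_n = Σ_{j=1}^n a_j; i.e., p^{1/2} Σ_{j=1}^{ν_p} (Y_j + p^{1/2} a_j) converges in distribution to AL(0, a, σ) as p → 0⁺. -/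
open MeasureTheory ProbabilityTheory Filter Complex Set
open scoped Real ENNReal NNReal

set_option maxHeartbeats 1000000

section Helpers

variable {Ω : Type*} [MeasurableSpace Ω] {μ : Measure Ω} [IsProbabilityMeasure μ]


lemma norm_cexp_sub_cexp_le {a b : ℂ} (ha : a.re ≤ 0) (hb : b.re ≤ 0) :
    ‖Complex.exp a - Complex.exp b‖ ≤ ‖a - b‖ := by
  have h := Convex.norm_image_sub_le_of_norm_hasFDerivWithin_le
    (f := Complex.exp) (s := {z : ℂ | z.re ≤ 0}) (C := 1)
    (f' := fun z => (ContinuousLinearMap.restrictScalars ℝ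
        ((1 : ℂ →L[ℂ] ℂ).smulRight (Complex.exp z))))
    (fun z _ => ((Complex.hasDerivAt_exp z).hasFDerivAt.restrictScalars ℝ).hasFDerivWithinAt)
    (fun z hz => by
      rw [ContinuousLinearMap.norm_restrictScalars,
        ContinuousLinearMap.norm_smulRight_apply]
      simpa [ContinuousLinearMap.one_def, Complex.norm_exp]
        using Real.exp_le_one_iff.mpr hz)
    (convex_halfSpace_re_le 0) hb ha
  simpa using h



lemma integrable_cos_comp {W : Ω → ℝ} (hW : Measurable W) :
    Integrable (fun ω => Real.cos (W ω)) μ :=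
  Integrable.mono' (integrable_const 1) hW.cos.aestronglyMeasurable
    (ae_of_all _ fun ω => by simpa [Real.norm_eq_abs] using Real.abs_cos_le_one (W ω))

lemma integrable_sin_comp {W : Ω → ℝ} (hW : Measurable W) :
    Integrable (fun ω => Real.sin (W ω)) μ :=
  Integrable.mono' (integrable_const 1) hW.sin.aestronglyMeasurable
    (ae_of_all _ fun ω => by simpa [Real.norm_eq_abs] using Real.abs_sin_le_one (W ω))

lemma my_integral_ofReal {f : Ω → ℝ} :
    ∫ ω, ((f ω : ℝ) : ℂ) ∂μ = ((∫ ω, f ω ∂μ : ℝ) : ℂ) :=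
  Complex.ofRealLI.integral_comp_comm f

lemma integral_cexp_decomp {W : Ω → ℝ} (hW : Measurable W) :
    ∫ ω, Complex.exp (Complex.I * (W ω : ℂ)) ∂μ
      = ((∫ ω, Real.cos (W ω) ∂μ : ℝ) : ℂ) + ((∫ ω, Real.sin (W ω) ∂μ : ℝ) : ℂ) * Complex.I := by
  have h : ∀ ω, Complex.exp (Complex.I * (W ω : ℂ))
      = ((Real.cos (W ω) : ℂ)) + ((Real.sin (W ω) : ℂ)) * Complex.I := fun ω => by
    rw [mul_comm, Complex.exp_mul_I, Complex.ofReal_cos, Complex.ofReal_sin]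
  have i1 : Integrable (fun ω => ((Real.cos (W ω) : ℝ) : ℂ)) μ := (integrable_cos_comp hW).ofReal
  have i2 : Integrable (fun ω => ((Real.sin (W ω) : ℝ) : ℂ) * Complex.I) μ :=
    ((integrable_sin_comp hW).ofReal).mul_const Complex.I
  simp_rw [h]
  rw [integral_add i1 i2, integral_mul_const, my_integral_ofReal, my_integral_ofReal]




lemma integrable_bdd {g : Ω → ℝ} (hm : AEStronglyMeasurable g μ) (hb : ∀ ω, |g ω| ≤ 1) :
    Integrable g μ :=
  Integrable.mono' (integrable_const 1) hm
    (ae_of_all _ fun ω => by simpa [Real.norm_eq_abs] using hb ω)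


lemma indep_integral_cexp_mul {X Z : Ω → ℝ} (h : IndepFun X Z μ)
    (hX : Measurable X) (hZ : Measurable Z) :
    ∫ ω, Complex.exp (Complex.I * ((X ω + Z ω : ℝ) : ℂ)) ∂μ
      = (∫ ω, Complex.exp (Complex.I * ((X ω : ℝ) : ℂ)) ∂μ)
        * ∫ ω, Complex.exp (Complex.I * ((Z ω : ℝ) : ℂ)) ∂μ := by
  have icX : Integrable (fun ω => Real.cos (X ω)) μ := integrable_cos_comp hX
  have isX : Integrable (fun ω => Real.sin (X ω)) μ := integrable_sin_comp hX
  have icZ : Integrable (fun ω => Real.cos (Z ω)) μ := integrable_cos_comp hZ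
  have isZ : Integrable (fun ω => Real.sin (Z ω)) μ := integrable_sin_comp hZ
  have pb : ∀ (f g : ℝ → ℝ), (∀ x, |f x| ≤ 1) → (∀ x, |g x| ≤ 1) → Measurable f → Measurable g →
      Integrable (fun ω => f (X ω) * g (Z ω)) μ := fun f g hf hg mf mg =>
    integrable_bdd ((mf.comp hX).mul (mg.comp hZ)).aestronglyMeasurable
      (fun ω => by
        rw [abs_mul]
        exact mul_le_one₀ (hf _) (abs_nonneg _) (hg _))
  have pcc := pb _ _ Real.abs_cos_le_one Real.abs_cos_le_one Real.measurable_cos Real.measurable_cos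
  have pss := pb _ _ Real.abs_sin_le_one Real.abs_sin_le_one Real.measurable_sin Real.measurable_sin
  have psc := pb _ _ Real.abs_sin_le_one Real.abs_cos_le_one Real.measurable_sin Real.measurable_cos
  have pcs := pb _ _ Real.abs_cos_le_one Real.abs_sin_le_one Real.measurable_cos Real.measurable_sin
  have e1 := (h.comp Real.measurable_cos Real.measurable_cos).integral_fun_mul_eq_mul_integral icX.1 icZ.1
  have e2 := (h.comp Real.measurable_sin Real.measurable_sin).integral_fun_mul_eq_mul_integral isX.1 isZ.1
  have e3 := (h.comp Real.measurable_sin Real.measurable_cos).integral_fun_mul_eq_mul_integral isX.1 icZ.1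
  have e4 := (h.comp Real.measurable_cos Real.measurable_sin).integral_fun_mul_eq_mul_integral icX.1 isZ.1
  simp only [Function.comp_def] at e1 e2 e3 e4
  rw [integral_cexp_decomp (W := fun ω => X ω + Z ω) (hX.add hZ), integral_cexp_decomp hX, integral_cexp_decomp hZ]
  have hcos : ∫ ω, Real.cos (X ω + Z ω) ∂μ
      = (∫ ω, Real.cos (X ω) ∂μ) * (∫ ω, Real.cos (Z ω) ∂μ)
        - (∫ ω, Real.sin (X ω) ∂μ) * (∫ ω, Real.sin (Z ω) ∂μ) := by
    simp_rw [Real.cos_add]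
    rw [integral_sub pcc pss, e1, e2]
  have hsin : ∫ ω, Real.sin (X ω + Z ω) ∂μ
      = (∫ ω, Real.sin (X ω) ∂μ) * (∫ ω, Real.cos (Z ω) ∂μ)
        + (∫ ω, Real.cos (X ω) ∂μ) * (∫ ω, Real.sin (Z ω) ∂μ) := by
    simp_rw [Real.sin_add]
    rw [integral_add psc pcs, e3, e4]
  rw [hcos, hsin]
  push_cast
  linear_combination (-((∫ ω, Real.sin (X ω) ∂μ : ℝ) * (∫ ω, Real.sin (Z ω) ∂μ : ℝ)) : ℂ) *
    Complex.I_sq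


lemma charFun_gaussianReal (v : NNReal) (u : ℝ) :
    ∫ x : ℝ, Complex.exp (Complex.I * ((u * x : ℝ) : ℂ)) ∂(gaussianReal 0 v)
      = Complex.exp (-((v : ℝ) * u ^ 2 / 2 : ℝ) : ℝ) := by
  by_cases hv : v = 0
  · subst hv
    simp [gaussianReal_zero_var, integral_dirac]
  · have hv' : 0 < (v : ℝ) := by
      have := hv
      positivity
    set vr : ℝ := (v : ℝ) with hvr
    have h2πv : 0 < 2 * π * vr := by positivity
    rw [gaussianReal_of_var_ne_zero _ hv]
    have hd : gaussianPDF 0 v = fun x => (((gaussianPDFReal 0 v x).toNNReal : ℝ≥0) : ℝ≥0∞) :=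
      rfl
    rw [hd, integral_withDensity_eq_integral_smul
      (measurable_gaussianPDFReal 0 v).real_toNNReal _]
    have hb : ((-(1/(2*vr)) : ℝ) : ℂ).re < 0 := by
      rw [Complex.ofReal_re]
      have : 0 < 1/(2*vr) := by positivity
      linarith
    have key : ∀ x : ℝ, ((gaussianPDFReal 0 v x).toNNReal : ℝ≥0) • Complex.exp (Complex.I * ((u * x : ℝ) : ℂ))
        = ((Real.sqrt (2*π*vr) : ℝ) : ℂ)⁻¹ *
          Complex.exp (((-(1/(2*vr)) : ℝ) : ℂ) * (x:ℂ)^2 + ((u:ℂ)*Complex.I) * (x:ℂ) + 0) := by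
      intro x
      have hnn : 0 ≤ gaussianPDFReal 0 v x := gaussianPDFReal_nonneg 0 v x
      rw [NNReal.smul_def, Real.coe_toNNReal _ hnn]
      rw [gaussianPDFReal_def]
      simp only []
      rw [Complex.real_smul]
      push_cast
      rw [mul_assoc, ← Complex.exp_add]
      congr 1
      push_cast
      have hvrne : (vr : ℂ) ≠ 0 := by
        simp [Complex.ofReal_ne_zero]
        positivity
      rw [← hvr]
      field_simp
      ring
    simp_rw [key]
    rw [integral_const_mul, integral_cexp_quadratic hb ((u:ℂ)*Complex.I) 0]
    have hmb : -((-(1/(2*vr)) : ℝ) : ℂ) = ((1/(2*vr) : ℝ) : ℂ) := by push_cast; ring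
    rw [hmb]
    have hpow : ((π : ℂ) / ((1/(2*vr) : ℝ) : ℂ)) ^ (1/2 : ℂ) = ((Real.sqrt (2*π*vr) : ℝ) : ℂ) := by
      have h1 : ((π : ℂ) / ((1/(2*vr) : ℝ) : ℂ)) = (((2*π*vr : ℝ)) : ℂ) := by
        push_cast
        field_simp
      rw [h1, show (1/2 : ℂ) = ((1/2 : ℝ) : ℂ) by norm_num,
        ← Complex.ofReal_cpow h2πv.le, ← Real.sqrt_eq_rpow]
    rw [hpow]
    have hexp : (0 : ℂ) - ((u:ℂ)*Complex.I)^2 / (4 * ((-(1/(2*vr)) : ℝ) : ℂ)) = ((-(vr*u^2/2) : ℝ) : ℂ) := by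
      have hvrne : ((vr : ℝ) : ℂ) ≠ 0 := by
        simp only [Complex.ofReal_ne_zero]
        positivity
      push_cast
      field_simp
      rw [Complex.I_sq]
      ring
    rw [hexp]
    have hsqrtne : ((Real.sqrt (2*π*vr) : ℝ) : ℂ) ≠ 0 := by
      simp only [Complex.ofReal_ne_zero]
      positivity
    rw [← Complex.ofReal_exp, ← mul_assoc, inv_mul_cancel₀ hsqrtne, one_mul]





lemma charFun_sum (Y : ℕ → Ω → ℝ) (v : ℕ → NNReal)
    (hmeas : ∀ j, Measurable (Y j))
    (hindep : iIndepFun Y μ)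
    (hgauss : ∀ j, Measure.map (Y j) μ = gaussianReal 0 (v j))
    (u : ℝ) : ∀ n : ℕ,
    ∫ ω, Complex.exp (Complex.I * ((u * ∑ j ∈ Finset.range n, Y j ω : ℝ) : ℂ)) ∂μ
      = Complex.exp (-((∑ j ∈ Finset.range n, (v j : ℝ)) * u ^ 2 / 2 : ℝ) : ℝ) := by
  intro n
  induction n with
  | zero => simp
  | succ n ih =>
    have hgYn : ∫ ω, Complex.exp (Complex.I * ((u * Y n ω : ℝ) : ℂ)) ∂μ
        = Complex.exp (-((v n : ℝ) * u ^ 2 / 2 : ℝ) : ℝ) := by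
      have hf : Continuous (fun x : ℝ => Complex.exp (Complex.I * ((u * x : ℝ) : ℂ))) := by
        continuity
      rw [← charFun_gaussianReal (v n) u, ← hgauss n,
        integral_map (hmeas n).aemeasurable hf.aestronglyMeasurable]
    have hSind : IndepFun (fun ω => u * ∑ j ∈ Finset.range n, Y j ω) (fun ω => u * Y n ω) μ := by
      have h0 : IndepFun (∑ j ∈ Finset.range n, Y j) (Y n) μ :=
        hindep.indepFun_finsetSum_of_notMem hmeas (Finset.notMem_range_self)
      have h1 := h0.comp (measurable_const_mul u) (measurable_const_mul u)
      have h2 : ((fun x : ℝ => u * x) ∘ (∑ j ∈ Finset.range n, Y j))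
          = fun ω => u * ∑ j ∈ Finset.range n, Y j ω := by
        funext ω
        simp [Finset.sum_apply]
      rwa [h2] at h1
    have hmS : Measurable (fun ω => u * ∑ j ∈ Finset.range n, Y j ω) :=
      (Finset.measurable_sum _ fun j _ => hmeas j).const_mul u
    have hmZ : Measurable (fun ω => u * Y n ω) := (hmeas n).const_mul u
    have hsplit : ∀ ω : Ω, (u * ∑ j ∈ Finset.range (n+1), Y j ω : ℝ)
        = (u * ∑ j ∈ Finset.range n, Y j ω) + (u * Y n ω) := fun ω => by
      rw [Finset.sum_range_succ]; ring
    simp_rw [hsplit]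
    rw [indep_integral_cexp_mul hSind hmS hmZ, ih, hgYn, ← Complex.exp_add]
    congr 1
    push_cast [Finset.sum_range_succ]
    ring



lemma abel_limit {z : ℕ → ℂ} {w : ℂ} (hz : ∀ n, (z n).re ≤ 0) (hw : w.re ≤ 0)
    (hlim : Tendsto (fun n : ℕ => z n / n) atTop (nhds w)) (hw1 : 1 - w ≠ 0) :
    Tendsto (fun p : ℝ => ∑' n : ℕ,
        (((1 - p) ^ n * p : ℝ) : ℂ) * Complex.exp ((p : ℂ) * z (n + 1)))
      (nhdsWithin 0 (Set.Ioi 0)) (nhds (1 - w)⁻¹) := by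
  set f : ℝ → ℂ := fun p => ∑' n : ℕ,
    (((1 - p) ^ n * p : ℝ) : ℂ) * Complex.exp ((p : ℂ) * z (n + 1)) with hf
  set g : ℝ → ℂ := fun p => Complex.exp ((p : ℂ) * w) with hg
  set M : ℝ → ℂ := fun p => ((p : ℂ) * g p) * (1 - (1 - (p : ℂ)) * g p)⁻¹ with hM
  -- basic facts for p ∈ Ioo 0 1
  have hnormg : ∀ p : ℝ, 0 ≤ p → ‖g p‖ ≤ 1 := by
    intro p hp
    rw [hg]
    simp only [Complex.norm_exp, Complex.re_ofReal_mul]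
    exact Real.exp_le_one_iff.mpr (mul_nonpos_of_nonneg_of_nonpos hp hw)
  have hr : ∀ p : ℝ, p ∈ Set.Ioo (0:ℝ) 1 → ‖(1 - (p:ℂ)) * g p‖ < 1 := by
    intro p hp
    rw [norm_mul]
    have h1 : ‖(1 - (p:ℂ))‖ = 1 - p := by
      rw [show (1 - (p:ℂ)) = ((1 - p : ℝ) : ℂ) by push_cast; ring]
      rw [Complex.norm_real, Real.norm_eq_abs, _root_.abs_of_nonneg (by linarith [hp.2] : (0:ℝ) ≤ 1 - p)]
    rw [h1]
    calc (1 - p) * ‖g p‖ ≤ (1 - p) * 1 :=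
          mul_le_mul_of_nonneg_left (hnormg p hp.1.le) (by linarith [hp.2])
      _ < 1 := by linarith [hp.1]
  -- HasSum for the main term
  have hMsum : ∀ p : ℝ, p ∈ Set.Ioo (0:ℝ) 1 →
      HasSum (fun n : ℕ => (((1 - p) ^ n * p : ℝ) : ℂ) * Complex.exp
        (((p * (n + 1) : ℝ) : ℂ) * w)) (M p) := by
    intro p hp
    have hgeo := (hasSum_geometric_of_norm_lt_one (hr p hp)).mul_left ((p : ℂ) * g p)
    have heq : (fun n : ℕ => ((p : ℂ) * g p) * ((1 - (p:ℂ)) * g p) ^ n)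
        = fun n : ℕ => (((1 - p) ^ n * p : ℝ) : ℂ) * Complex.exp (((p * (n + 1) : ℝ) : ℂ) * w) := by
      funext n
      have : Complex.exp (((p * (n + 1) : ℝ) : ℂ) * w) = g p ^ (n + 1) := by
        rw [hg, ← Complex.exp_nat_mul]
        congr 1
        push_cast
        ring
      rw [this, pow_succ]
      push_cast
      rw [mul_pow]
      ring
    rw [heq] at hgeo
    exact hgeo
  -- convergence of the main term
  have hgcont : Tendsto g (nhdsWithin 0 (Set.Ioi 0)) (nhds 1) := by
    have hcont : Continuous g := by
      rw [hg]; continuity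
    have h20 : Tendsto g (nhdsWithin (0:ℝ) (Set.Ioi 0)) (nhds (g 0)) :=
      (hcont.tendsto 0).mono_left nhdsWithin_le_nhds
    simpa [hg] using h20
  have hderiv : HasDerivAt g w 0 := by
    have h1 : HasDerivAt (fun p : ℝ => ((p : ℂ) * w)) w 0 := by
      simpa using (Complex.ofRealCLM.hasDerivAt (x := (0:ℝ))).mul_const w
    have h2 := h1.cexp
    simpa [hg] using h2
  have hslope : Tendsto (fun p : ℝ => (g p - 1) / (p : ℂ))
      (nhdsWithin 0 (Set.Ioi 0)) (nhds w) := by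
    have h3 := hasDerivAt_iff_tendsto_slope.mp hderiv
    have h4 : Tendsto (slope g 0) (nhdsWithin 0 (Set.Ioi 0)) (nhds w) :=
      h3.mono_left (nhdsWithin_mono _ (fun x hx => ne_of_gt hx))
    refine h4.congr (fun p => ?_)
    have hg0 : g 0 = 1 := by simp [hg]
    simp [slope, hg0, Complex.real_smul, div_eq_inv_mul]
  have hMlim : Tendsto M (nhdsWithin 0 (Set.Ioi 0)) (nhds (1 - w)⁻¹) := by
    set h : ℝ → ℂ := fun p => (1 - (1 - (p:ℂ)) * g p) / (p:ℂ) with hh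
    have hhlim : Tendsto h (nhdsWithin 0 (Set.Ioi 0)) (nhds (1 - w)) := by
      have heq : ∀ᶠ p in nhdsWithin 0 (Set.Ioi 0), g p - (g p - 1)/(p:ℂ) = h p := by
        filter_upwards [self_mem_nhdsWithin] with p hp
        have hpne : ((p:ℝ):ℂ) ≠ 0 := by
          exact_mod_cast ne_of_gt (hp : (0:ℝ) < p)
        rw [hh]
        field_simp
        ring
      have h5 : Tendsto (fun p => g p - (g p - 1)/(p:ℂ)) (nhdsWithin 0 (Set.Ioi 0))
          (nhds (1 - w)) := hgcont.sub hslope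
      exact Tendsto.congr' heq h5
    have hMeq : ∀ᶠ p in nhdsWithin 0 (Set.Ioi 0), g p * (h p)⁻¹ = M p := by
      filter_upwards with p
      rw [hM, hh, inv_div]
      ring
    have h6 : Tendsto (fun p => g p * (h p)⁻¹) (nhdsWithin 0 (Set.Ioi 0))
        (nhds (1 * (1 - w)⁻¹)) := hgcont.mul (hhlim.inv₀ hw1)
    rw [one_mul] at h6
    exact Tendsto.congr' hMeq h6
  have hDiff : Tendsto (fun p => f p - M p) (nhdsWithin 0 (Set.Ioi 0)) (nhds 0) := by
    rw [NormedAddCommGroup.tendsto_nhds_zero]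
    intro ε hε
    set ε' := ε/4 with hε'
    have hε'pos : 0 < ε' := by positivity
    obtain ⟨N, hN⟩ := Metric.tendsto_atTop.mp hlim ε' hε'pos
    set C : ℝ := ∑ k ∈ Finset.range (max N 1 + 1), ‖z k - (k:ℂ) * w‖ with hC
    have hCnn : 0 ≤ C := Finset.sum_nonneg fun k _ => norm_nonneg _
    have hbound : ∀ n : ℕ, ‖z (n+1) - ((n:ℂ)+1) * w‖ ≤ C + ε' * ((n:ℝ)+1) := by
      intro n
      have hcast : ((n+1 : ℕ):ℂ) = (n:ℂ)+1 := by push_cast; ring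
      rcases le_or_gt (n+1) (max N 1) with hle | hgt
      · have hmem : (n+1) ∈ Finset.range (max N 1 + 1) := Finset.mem_range.mpr (by omega)
        have h7 : ‖z (n+1) - ((n+1:ℕ):ℂ) * w‖ ≤ C :=
          Finset.single_le_sum (f := fun k => ‖z k - (k:ℂ) * w‖)
            (fun k _ => norm_nonneg _) hmem
        rw [hcast] at h7
        have h8 : (0:ℝ) ≤ ε' * ((n:ℝ)+1) := by positivity
        linarith
      · have hge : N ≤ n+1 := le_trans (le_max_left _ _) hgt.le
        have h1 := hN (n+1) hge
        rw [dist_eq_norm] at h1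
        have hne : ((n+1:ℕ):ℂ) ≠ 0 := by exact_mod_cast Nat.succ_ne_zero n
        have h2 : z (n+1) - ((n:ℂ)+1)*w = ((n+1:ℕ):ℂ) * (z (n+1)/((n+1:ℕ):ℂ) - w) := by
          rw [mul_sub, mul_div_cancel₀ _ hne, hcast]
        rw [h2, norm_mul]
        have h9 : ‖((n+1:ℕ):ℂ)‖ = ((n:ℝ)+1) := by
          rw [Complex.norm_natCast]
          push_cast
          ring
        rw [h9]
        have h10 : ((n:ℝ)+1) * ‖z (n+1) / ((n+1:ℕ):ℂ) - w‖ ≤ ((n:ℝ)+1) * ε' :=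
          mul_le_mul_of_nonneg_left h1.le (by positivity)
        nlinarith
    have hev : ∀ᶠ p in nhdsWithin 0 (Set.Ioi 0), p ∈ Set.Ioo (0:ℝ) (min 1 (ε'/(C+1))) :=
      Ioo_mem_nhdsGT_of_mem ⟨le_refl 0, lt_min one_pos (div_pos hε'pos (by linarith))⟩
    filter_upwards [hev] with p hp
    have hp1 : 0 < p := hp.1
    have hp2 : p < 1 := lt_of_lt_of_le hp.2 (min_le_left _ _)
    have hpC : p * C < ε' := by
      have h11 : p < ε'/(C+1) := lt_of_lt_of_le hp.2 (min_le_right _ _)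
      have h12 : p * (C+1) < ε' := (lt_div_iff₀ (by positivity)).mp h11
      nlinarith
    have hgeoR : HasSum (fun n : ℕ => (1-p)^n) p⁻¹ := by
      have h13 := hasSum_geometric_of_lt_one (by linarith : (0:ℝ) ≤ 1-p) (by linarith)
      simpa using h13
    have hnsR : HasSum (fun n : ℕ => (n:ℝ) * (1-p)^n) ((1-p)/p^2) := by
      have h14 := hasSum_coe_mul_geometric_of_norm_lt_one (r := 1-p)
        (by rw [Real.norm_eq_abs, _root_.abs_of_nonneg (by linarith)]; linarith)
      simpa using h14
    have hBsum : HasSum (fun n : ℕ => (1-p)^n * p * (p * (C + ε'*((n:ℝ)+1)))) (p*C + ε') := by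
      have h0 : HasSum (fun n : ℕ => p^2*C*(1-p)^n + (p^2*ε'*((n:ℝ)*(1-p)^n) + p^2*ε'*(1-p)^n))
          (p^2*C*p⁻¹ + (p^2*ε'*((1-p)/p^2) + p^2*ε'*p⁻¹)) :=
        (hgeoR.mul_left _).add ((hnsR.mul_left _).add (hgeoR.mul_left _))
      have heqf : (fun n : ℕ => p^2*C*(1-p)^n + (p^2*ε'*((n:ℝ)*(1-p)^n) + p^2*ε'*(1-p)^n))
          = fun n : ℕ => (1-p)^n * p * (p * (C + ε'*((n:ℝ)+1))) := funext fun n => by ring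
      have heqv : p^2*C*p⁻¹ + (p^2*ε'*((1-p)/p^2) + p^2*ε'*p⁻¹) = p*C + ε' := by
        field_simp
        ring
      rw [heqf, heqv] at h0
      exact h0
    have hterm : ∀ n : ℕ, ‖(((1-p)^n * p : ℝ):ℂ) * Complex.exp ((p:ℂ) * z (n+1))
        - (((1-p)^n * p : ℝ):ℂ) * Complex.exp (((p * ((n:ℝ)+1) : ℝ):ℂ) * w)‖
        ≤ (1-p)^n * p * (p * (C + ε'*((n:ℝ)+1))) := by
      intro n
      rw [← mul_sub, norm_mul, Complex.norm_real, Real.norm_eq_abs,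
        _root_.abs_of_nonneg (mul_nonneg (pow_nonneg (by linarith) n) hp1.le)]
      have hre1 : ((p:ℂ) * z (n+1)).re ≤ 0 := by
        rw [Complex.re_ofReal_mul]
        exact mul_nonpos_of_nonneg_of_nonpos hp1.le (hz _)
      have hre2 : ((((p * ((n:ℝ)+1) : ℝ)):ℂ)*w).re ≤ 0 := by
        rw [Complex.re_ofReal_mul]
        exact mul_nonpos_of_nonneg_of_nonpos (mul_nonneg hp1.le (by positivity)) hw
      have h3 := norm_cexp_sub_cexp_le hre1 hre2
      have h4 : (p:ℂ) * z (n+1) - (((p * ((n:ℝ)+1) : ℝ)):ℂ)*w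
          = (p:ℂ) * (z (n+1) - ((n:ℂ)+1)*w) := by
        push_cast
        ring
      rw [h4, norm_mul, Complex.norm_real, Real.norm_eq_abs, _root_.abs_of_pos hp1] at h3
      have h5 : p * ‖z (n+1) - ((n:ℂ)+1)*w‖ ≤ p * (C + ε'*((n:ℝ)+1)) :=
        mul_le_mul_of_nonneg_left (hbound n) hp1.le
      exact mul_le_mul_of_nonneg_left (h3.trans h5) (mul_nonneg (pow_nonneg (by linarith) n) hp1.le)
    have hsumf : Summable (fun n : ℕ => (((1-p)^n * p : ℝ):ℂ) * Complex.exp ((p:ℂ) * z (n+1))) := by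
      refine Summable.of_norm_bounded (g := fun n => (1-p)^n * p)
        ((summable_geometric_of_lt_one (by linarith) (by linarith)).mul_right p) (fun n => ?_)
      rw [norm_mul, Complex.norm_real, Real.norm_eq_abs,
        _root_.abs_of_nonneg (mul_nonneg (pow_nonneg (by linarith) n) hp1.le)]
      have hexp1 : ‖Complex.exp ((p:ℂ) * z (n+1))‖ ≤ 1 := by
        rw [Complex.norm_exp]
        refine Real.exp_le_one_iff.mpr ?_
        rw [Complex.re_ofReal_mul]
        exact mul_nonpos_of_nonneg_of_nonpos hp1.le (hz _)
      calc (1-p)^n * p * ‖Complex.exp ((p:ℂ) * z (n+1))‖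
          ≤ (1-p)^n * p * 1 := mul_le_mul_of_nonneg_left hexp1 (mul_nonneg (pow_nonneg (by linarith) n) hp1.le)
        _ = (1-p)^n * p := mul_one _
    have hsumm := (hMsum p ⟨hp1, hp2⟩).summable
    have hMp : M p = ∑' n : ℕ, (((1-p)^n * p : ℝ):ℂ)
        * Complex.exp (((p * ((n:ℝ)+1) : ℝ):ℂ) * w) := ((hMsum p ⟨hp1, hp2⟩).tsum_eq).symm
    have hfMeq : f p - M p = ∑' n : ℕ, ((((1-p)^n * p : ℝ):ℂ) * Complex.exp ((p:ℂ) * z (n+1))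
        - (((1-p)^n * p : ℝ):ℂ) * Complex.exp (((p * ((n:ℝ)+1) : ℝ):ℂ) * w)) := by
      rw [hf, hMp]
      exact (Summable.tsum_sub hsumf hsumm).symm
    rw [hfMeq]
    have hfinal := tsum_of_norm_bounded hBsum hterm
    calc ‖∑' n : ℕ, ((((1-p)^n * p : ℝ):ℂ) * Complex.exp ((p:ℂ) * z (n+1))
        - (((1-p)^n * p : ℝ):ℂ) * Complex.exp (((p * ((n:ℝ)+1) : ℝ):ℂ) * w))‖
        ≤ p*C + ε' := hfinal
      _ < ε := by linarith
  have hfinal2 := hMlim.add hDiff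
  rw [add_zero] at hfinal2
  refine Tendsto.congr (fun p => ?_) hfinal2
  rw [hf]
  ring

end Helpers

/-- Proposition 2 of the paper.  Let `Y j` be independent Gaussian random
variables with `Y j ~ N(0, v j)` such that the Cesàro limit `σ²` of the variances exists and
is positive, and let `a j` be a real sequence whose Cesàro limit `A` exists.  Then the
characteristic function of the normalized geometric sum converges pointwise to that of
`AL(0, A, σ)`, i.e. `p^{1/2} ∑_{j=1}^{ν_p} (Y_j + p^{1/2} a_j) ⟶ᵈ AL(0, A, σ)` as `p → 0⁺`. -/
theorem stmt_3
    {Ω : Type*} [MeasurableSpace Ω] {μ : Measure Ω} [IsProbabilityMeasure μ]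
    (Y : ℕ → Ω → ℝ) (a : ℕ → ℝ) (v : ℕ → NNReal) (σ2 A : ℝ)
    (hmeas : ∀ j, Measurable (Y j))
    (hindep : iIndepFun Y μ)
    (hgauss : ∀ j, Measure.map (Y j) μ = gaussianReal 0 (v j))
    (hσ2 : Tendsto (fun n : ℕ => (1 / (n : ℝ)) * ∑ j ∈ Finset.range n, (v j : ℝ)) atTop
      (nhds σ2))
    (hσ2pos : 0 < σ2)
    (hA : Tendsto (fun n : ℕ => (1 / (n : ℝ)) * ∑ j ∈ Finset.range n, a j) atTop (nhds A)) :
    ∀ t : ℝ,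
      Tendsto
        (fun p : ℝ => ∑' n : ℕ,
          (((1 - p) ^ n * p : ℝ) : ℂ) *
            ∫ ω, Complex.exp (Complex.I *
              ((t * (Real.sqrt p * (∑ j ∈ Finset.range (n + 1), Y j ω)
                + p * ∑ j ∈ Finset.range (n + 1), a j) : ℝ) : ℂ)) ∂μ)
        (nhdsWithin 0 (Set.Ioi 0))
        (nhds (1 / (1 - Complex.I * A * t + σ2 * t ^ 2 / 2))) := by
  intro t
  set B : ℕ → ℝ := fun n => ∑ j ∈ Finset.range n, a j with hB
  set T : ℕ → ℝ := fun n => ∑ j ∈ Finset.range n, (v j : ℝ) with hT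
  have hTnn : ∀ n, 0 ≤ T n := fun n => Finset.sum_nonneg fun j _ => (v j).coe_nonneg
  set z : ℕ → ℂ := fun n => Complex.I * (t:ℂ) * ((B n : ℝ):ℂ) - ((t^2 * T n / 2 : ℝ):ℂ) with hz
  set w : ℂ := Complex.I * (t:ℂ) * ((A : ℝ):ℂ) - ((t^2 * σ2 / 2 : ℝ):ℂ) with hw
  have hzre : ∀ n, (z n).re ≤ 0 := by
    intro n
    rw [hz]
    simp only [Complex.sub_re, Complex.mul_re, Complex.mul_im, Complex.I_re, Complex.I_im,
      Complex.ofReal_re, Complex.ofReal_im]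
    have h1 : 0 ≤ t^2 * T n / 2 := by
      have := hTnn n
      positivity
    ring_nf
    nlinarith
  have hwre : w.re ≤ 0 := by
    rw [hw]
    simp only [Complex.sub_re, Complex.mul_re, Complex.mul_im, Complex.I_re, Complex.I_im,
      Complex.ofReal_re, Complex.ofReal_im]
    have h1 : 0 ≤ t^2 * σ2 / 2 := by positivity
    ring_nf
    nlinarith
  have hw1 : 1 - w ≠ 0 := by
    intro h
    have h2 := congrArg Complex.re h
    rw [hw] at h2
    simp only [Complex.sub_re, Complex.one_re, Complex.mul_re, Complex.mul_im, Complex.I_re,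
      Complex.I_im, Complex.ofReal_re, Complex.ofReal_im, Complex.zero_re] at h2
    have h1 : 0 ≤ t^2 * σ2 / 2 := by positivity
    nlinarith
  have hlim : Tendsto (fun n : ℕ => z n / n) atTop (nhds w) := by
    have heq : ∀ n : ℕ, z n / (n:ℂ)
        = Complex.I * (t:ℂ) * (((1/(n:ℝ)) * B n : ℝ):ℂ)
          - ((t^2 * ((1/(n:ℝ)) * T n) / 2 : ℝ):ℂ) := by
      intro n
      rw [hz]
      push_cast
      ring
    rw [show w = Complex.I * (t:ℂ) * ((A : ℝ):ℂ) - ((t^2 * σ2 / 2 : ℝ):ℂ) from hw]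
    refine Tendsto.congr (fun n => (heq n).symm) ?_
    have h3 : Tendsto (fun n : ℕ => (((1/(n:ℝ)) * B n : ℝ):ℂ)) atTop (nhds ((A:ℝ):ℂ)) :=
      (Complex.continuous_ofReal.tendsto A).comp hA
    have h4 : Tendsto (fun n : ℕ => ((t^2 * ((1/(n:ℝ)) * T n) / 2 : ℝ):ℂ)) atTop
        (nhds ((t^2 * σ2 / 2 : ℝ):ℂ)) :=
      (Complex.continuous_ofReal.tendsto _).comp ((hσ2.const_mul (t^2)).div_const 2)
    exact (h3.const_mul _).sub h4
  have habel := abel_limit hzre hwre hlim hw1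
  have hval : (1 - w)⁻¹ = 1 / (1 - Complex.I * A * t + σ2 * t ^ 2 / 2) := by
    rw [one_div, hw]
    congr 1
    push_cast
    ring
  rw [hval] at habel
  refine Tendsto.congr' ?_ habel
  filter_upwards [self_mem_nhdsWithin] with p (hp : p ∈ Set.Ioi (0:ℝ))
  have hp0 : (0:ℝ) < p := hp
  refine tsum_congr fun n => ?_
  congr 1
  refine Eq.symm ?_
  show ∫ ω, Complex.exp (Complex.I *
      ((t * (Real.sqrt p * (∑ j ∈ Finset.range (n + 1), Y j ω) + p * B (n+1)) : ℝ) : ℂ)) ∂μ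
    = Complex.exp ((p : ℂ) * z (n + 1))
  -- integral computation
  have hu : (t * Real.sqrt p)^2 = t^2 * p := by
    rw [mul_pow, Real.sq_sqrt hp0.le]
  have hsplit : ∀ ω : Ω, Complex.I *
      ((t * (Real.sqrt p * (∑ j ∈ Finset.range (n + 1), Y j ω) + p * B (n+1)) : ℝ) : ℂ)
      = Complex.I * ((t * p * B (n+1) : ℝ) : ℂ)
        + Complex.I * (((t * Real.sqrt p) * (∑ j ∈ Finset.range (n + 1), Y j ω) : ℝ) : ℂ) := by
    intro ω
    push_cast
    ring
  calc ∫ ω, Complex.exp (Complex.I *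
        ((t * (Real.sqrt p * (∑ j ∈ Finset.range (n + 1), Y j ω) + p * B (n+1)) : ℝ) : ℂ)) ∂μ
      = ∫ ω, Complex.exp (Complex.I * ((t * p * B (n+1) : ℝ) : ℂ)) *
          Complex.exp (Complex.I *
            (((t * Real.sqrt p) * (∑ j ∈ Finset.range (n + 1), Y j ω) : ℝ) : ℂ)) ∂μ := by
        refine integral_congr_ae (ae_of_all _ fun ω => ?_)
        dsimp only
        rw [hsplit ω, Complex.exp_add]
    _ = Complex.exp (Complex.I * ((t * p * B (n+1) : ℝ) : ℂ)) *
          ∫ ω, Complex.exp (Complex.I *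
            (((t * Real.sqrt p) * (∑ j ∈ Finset.range (n + 1), Y j ω) : ℝ) : ℂ)) ∂μ :=
        integral_const_mul _ _
    _ = Complex.exp (Complex.I * ((t * p * B (n+1) : ℝ) : ℂ)) *
          Complex.exp (-((T (n+1)) * (t * Real.sqrt p) ^ 2 / 2 : ℝ) : ℝ) := by
        rw [charFun_sum Y v hmeas hindep hgauss (t * Real.sqrt p) (n+1)]
    _ = Complex.exp ((p : ℂ) * z (n + 1)) := by
        rw [← Complex.exp_add]
        congr 1
        rw [hz, hu]
        push_cast
        ring
end

section
/- Let {Y_j} be a sequence of independent Gaussian random variables with Y_j ~ N(0, σ_j²), and suppose there exists α ∈ (0,1) such that lim_{n→∞} n^{-α} σ_n² = 0. Then for every ε > 0, lim_{p→0⁺} Σ_{j=1}^∞ (1-p)^{j-1} p · E[Y_j² · 1{|Y_j| ≥ ε p^{-1/2}}] = 0. -/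
open MeasureTheory ProbabilityTheory Filter Set


lemma my_gauss_integrable_pow (v : NNReal) (n : ℕ) :
    Integrable (fun x : ℝ => x ^ (2 * n)) (gaussianReal 0 v) := by
  by_cases hv : v = 0
  · subst hv
    rw [gaussianReal_zero_var]
    refine (integrable_const ((0:ℝ) ^ (2 * n))).congr ?_
    rw [MeasureTheory.ae_dirac_eq]
    exact Filter.eventually_pure.2 rfl
  · rw [gaussianReal_of_var_ne_zero 0 hv]
    rw [integrable_withDensity_iff (measurable_gaussianPDF 0 v)
      (ae_of_all _ fun x => ENNReal.ofReal_lt_top)]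
    have hv' : (0:ℝ) < (v:ℝ) := by positivity
    have hb : (0:ℝ) < (2 * (v:ℝ))⁻¹ := by positivity
    have hs : (-1 : ℝ) < ((2 * n : ℕ) : ℝ) := by
      have : (0:ℝ) ≤ ((2*n : ℕ) : ℝ) := by positivity
      linarith
    have h := (integrable_rpow_mul_exp_neg_mul_sq hb hs).const_mul
      ((Real.sqrt (2 * Real.pi * v))⁻¹)
    convert h using 1
    · rfl
    funext x
    rw [gaussianPDF_def, ENNReal.toReal_ofReal (gaussianPDFReal_nonneg 0 v x),
      gaussianPDFReal_def, Real.rpow_natCast]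
    ring_nf

lemma my_gauss_moment (v : NNReal) (n : ℕ) (hn : n ≠ 0) :
    ∫ x, x ^ (2 * n) ∂(gaussianReal 0 v)
      = (v : ℝ) ^ n * ∫ x, x ^ (2 * n) ∂(gaussianReal 0 1) := by
  by_cases hv : v = 0
  · subst hv
    rw [gaussianReal_zero_var, integral_dirac]
    simp [hn, pow_eq_zero_iff]
  · have hmap : (gaussianReal 0 1).map ((Real.sqrt v) * ·) = gaussianReal 0 v := by
      rw [gaussianReal_map_const_mul]
      congr 1
      · simp
      · ext
        simp [Real.sq_sqrt v.coe_nonneg]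
    rw [← hmap, integral_map (by fun_prop) (by fun_prop)]
    have h : ∀ x : ℝ, (Real.sqrt v * x) ^ (2 * n) = (v:ℝ)^n * x ^ (2*n) := by
      intro x
      rw [mul_pow, pow_mul, Real.sq_sqrt v.coe_nonneg]
    simp_rw [h, integral_const_mul]

lemma my_comp_integrable {Ω : Type*} [MeasurableSpace Ω] {μ : Measure Ω} {X : Ω → ℝ}
    (hX : Measurable X) {v : NNReal} (n : ℕ)
    (hg : Measure.map X μ = gaussianReal 0 v) :
    Integrable (fun ω => X ω ^ (2 * n)) μ := by
  have h1 : Integrable (fun x : ℝ => x ^ (2 * n)) (Measure.map X μ) := by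
    rw [hg]; exact my_gauss_integrable_pow v n
  exact (integrable_map_measure
    (f := X) (g := fun x : ℝ => x ^ (2 * n)) (by fun_prop) hX.aemeasurable).mp h1

lemma my_comp_integral {Ω : Type*} [MeasurableSpace Ω] {μ : Measure Ω} {X : Ω → ℝ}
    (hX : Measurable X) {v : NNReal} (n : ℕ)
    (hg : Measure.map X μ = gaussianReal 0 v) :
    ∫ ω, X ω ^ (2 * n) ∂μ = ∫ x, x ^ (2 * n) ∂(gaussianReal 0 v) := by
  rw [← hg, integral_map (f := fun x : ℝ => x ^ (2 * n)) hX.aemeasurable (by fun_prop)]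

set_option maxHeartbeats 1000000 in
/-- Lemma 3 of the paper.  Let `Y j` be independent Gaussian random variables
with `Y j ~ N(0, v j)` and suppose `n ^ (-α) * v n → 0` for some `α ∈ (0, 1)`.  Then for every
`ε > 0`, `∑_{j=1}^∞ (1-p)^{j-1} p ⋅ E[Y_j² ⋅ 1{|Y_j| ≥ ε p^{-1/2}}] → 0` as `p → 0⁺`. -/
theorem stmt_4
    {Ω : Type*} [MeasurableSpace Ω] {μ : Measure Ω} [IsProbabilityMeasure μ]
    (Y : ℕ → Ω → ℝ) (v : ℕ → NNReal) (α : ℝ)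
    (hmeas : ∀ j, Measurable (Y j))
    (hindep : iIndepFun Y μ)
    (hgauss : ∀ j, Measure.map (Y j) μ = gaussianReal 0 (v j))
    (hα0 : 0 < α) (hα1 : α < 1)
    (hvlim : Tendsto (fun n : ℕ => (n : ℝ) ^ (-α) * (v n : ℝ)) atTop (nhds 0)) :
    ∀ ε > (0 : ℝ),
      Tendsto
        (fun p : ℝ => ∑' j : ℕ,
          (1 - p) ^ j * p *
            ∫ ω in {ω | ε / Real.sqrt p ≤ |Y j ω|}, (Y j ω) ^ 2 ∂μ)
        (nhdsWithin 0 (Set.Ioi 0)) (nhds 0) := by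
  intro ε hε
  have h1α : (0:ℝ) < 1 - α := by linarith
  set k : ℕ := ⌈(3 : ℝ) / (1 - α)⌉₊ with hkdef
  have hk3 : (3:ℝ) / (1 - α) ≤ (k:ℝ) := Nat.le_ceil _
  set m : ℕ := ⌈α * (k:ℝ)⌉₊ with hmdef
  have hαk : α * (k:ℝ) ≤ (m:ℝ) := Nat.le_ceil _
  have hmR : (m:ℝ) < α * (k:ℝ) + 1 := Nat.ceil_lt_add_one (by positivity)
  have hkR : (m:ℝ) + 2 ≤ (k:ℝ) := by
    have h3 : 3 ≤ (1 - α) * (k:ℝ) := by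
      rw [div_le_iff₀ h1α] at hk3; linarith
    nlinarith
  have hmk : m + 2 ≤ k := by exact_mod_cast hkR
  have hk0 : k ≠ 0 := by omega
  -- N such that v j ≤ j ^ α for j ≥ N
  have hev : ∀ᶠ n : ℕ in atTop, (n : ℝ) ^ (-α) * (v n : ℝ) < 1 :=
    hvlim.eventually_lt_const one_pos
  obtain ⟨N₀, hN₀⟩ := eventually_atTop.mp hev
  set N : ℕ := max N₀ 1 with hNdef
  have hvN : ∀ j, N ≤ j → ((v j : ℝ)) ^ k ≤ (j:ℝ) ^ m := by
    intro j hj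
    have hj1 : 1 ≤ j := le_trans (le_max_right _ _) hj
    have hjR : (1:ℝ) ≤ (j:ℝ) := by exact_mod_cast hj1
    have h0 : (0:ℝ) < (j:ℝ) := by linarith
    have hsm : (j:ℝ) ^ (-α) * (v j : ℝ) ≤ 1 := (hN₀ j (le_trans (le_max_left _ _) hj)).le
    have hmulid : (j:ℝ) ^ α * (j:ℝ) ^ (-α) = 1 := by
      rw [← Real.rpow_add h0]; simp
    have hvj : (v j : ℝ) ≤ (j:ℝ) ^ α := by
      have h2 := mul_le_mul_of_nonneg_left hsm (Real.rpow_pos_of_pos h0 α).le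
      rw [mul_one, ← mul_assoc, hmulid, one_mul] at h2
      exact h2
    calc ((v j : ℝ)) ^ k ≤ ((j:ℝ) ^ α) ^ k := pow_le_pow_left₀ (v j).coe_nonneg hvj k
      _ = (j:ℝ) ^ (α * (k:ℝ)) := by
          rw [← Real.rpow_natCast ((j:ℝ) ^ α) k, ← Real.rpow_mul h0.le]
      _ ≤ (j:ℝ) ^ ((m:ℕ):ℝ) := Real.rpow_le_rpow_of_exponent_le hjR hαk
      _ = (j:ℝ) ^ m := Real.rpow_natCast _ m
  -- constants
  set C1 : ℝ := ∫ x, x ^ (2 * 1) ∂(gaussianReal 0 1) with hC1def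
  set Ck : ℝ := ∫ x, x ^ (2 * k) ∂(gaussianReal 0 1) with hCkdef
  have hC1 : 0 ≤ C1 := integral_nonneg fun x => by rw [pow_mul]; positivity
  have hCk : 0 ≤ Ck := integral_nonneg fun x => by rw [pow_mul]; positivity
  set D : ℝ := (m.factorial : ℝ) * 2 ^ m with hDdef
  have hD0 : 0 < D := by positivity
  set εp : ℝ := ε ^ (2 * (k - 1)) with hεpdef
  have hεp0 : 0 < εp := by positivity
  set K : ℝ := Ck * D / εp with hKdef
  have hK0 : 0 ≤ K := by positivity
  set A0 : ℝ := C1 * (∑ j ∈ Finset.range N, (v j : ℝ)) + 4 * K with hA0def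
  have hS0 : 0 ≤ ∑ j ∈ Finset.range N, (v j : ℝ) :=
    Finset.sum_nonneg fun j _ => (v j).coe_nonneg
  apply squeeze_zero' (g := fun p : ℝ => A0 * p)
  · -- nonnegativity
    filter_upwards [Ioo_mem_nhdsGT_of_mem (⟨le_refl (0:ℝ), zero_lt_one⟩)] with p hp
    refine tsum_nonneg fun j => ?_
    have hI : 0 ≤ ∫ ω in {ω | ε / Real.sqrt p ≤ |Y j ω|}, (Y j ω) ^ 2 ∂μ :=
      setIntegral_nonneg (measurableSet_le measurable_const (hmeas j).abs)
        fun ω _ => sq_nonneg _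
    have : (0:ℝ) ≤ 1 - p := by linarith [hp.2]
    exact mul_nonneg (mul_nonneg (pow_nonneg this j) hp.1.le) hI
  · -- main bound
    filter_upwards [Ioo_mem_nhdsGT_of_mem (⟨le_refl (0:ℝ), zero_lt_one⟩)] with p hp
    obtain ⟨hp0, hp1⟩ := hp
    have hp1' : (0:ℝ) ≤ 1 - p := by linarith
    set r : ℝ := Real.exp (-(p/2)) with hrdef
    have hr0 : 0 < r := Real.exp_pos _
    have hr1 : r < 1 := Real.exp_lt_one_iff.2 (by linarith)
    set t : ℝ := ε / Real.sqrt p with htdef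
    have ht0 : 0 < t := div_pos hε (Real.sqrt_pos.2 hp0)
    have ht2 : t ^ 2 = ε ^ 2 / p := by
      rw [htdef, div_pow, Real.sq_sqrt hp0.le]
    have hIset : ∀ j, MeasurableSet {ω | t ≤ |Y j ω|} := fun j =>
      measurableSet_le measurable_const (hmeas j).abs
    have hInn : ∀ j, 0 ≤ ∫ ω in {ω | t ≤ |Y j ω|}, (Y j ω) ^ 2 ∂μ := fun j =>
      setIntegral_nonneg (hIset j) fun ω _ => sq_nonneg _
    have hint2 : ∀ j, Integrable (fun ω => (Y j ω) ^ 2) μ := fun j => by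
      simpa using my_comp_integrable (hmeas j) 1 (hgauss j)
    have hint2k : ∀ j, Integrable (fun ω => (Y j ω) ^ (2 * k)) μ := fun j =>
      my_comp_integrable (hmeas j) k (hgauss j)
    have hpow2k : ∀ x : ℝ, (0:ℝ) ≤ x ^ (2 * k) := fun x => by rw [pow_mul]; positivity
    -- small-j bound
    have hIb1 : ∀ j, ∫ ω in {ω | t ≤ |Y j ω|}, (Y j ω) ^ 2 ∂μ ≤ C1 * (v j : ℝ) := by
      intro j
      have h1 : ∫ ω in {ω | t ≤ |Y j ω|}, (Y j ω) ^ 2 ∂μ ≤ ∫ ω, (Y j ω) ^ 2 ∂μ :=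
        setIntegral_le_integral (hint2 j) (ae_of_all _ fun ω => sq_nonneg _)
      have h2 : ∫ ω, (Y j ω) ^ 2 ∂μ = (v j : ℝ) * C1 := by
        have := my_comp_integral (hmeas j) 1 (hgauss j)
        simp only [mul_one, pow_one] at this ⊢
        rw [this, my_gauss_moment _ 1 one_ne_zero, pow_one]
      rw [h2] at h1
      linarith [h1, mul_comm (v j : ℝ) C1]
    -- large-j bound
    have hIbk : ∀ j, ∫ ω in {ω | t ≤ |Y j ω|}, (Y j ω) ^ 2 ∂μ
        ≤ (p / ε ^ 2) ^ (k - 1) * ((v j : ℝ) ^ k * Ck) := by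
      intro j
      set c : ℝ := (p / ε ^ 2) ^ (k - 1) with hcdef
      have hc0 : 0 < c := by positivity
      have key : ∀ ω ∈ {ω | t ≤ |Y j ω|}, (Y j ω) ^ 2 ≤ c * (Y j ω) ^ (2 * k) := by
        intro ω hω
        have habs : t ≤ |Y j ω| := hω
        have h2 : t ^ 2 ≤ (Y j ω) ^ 2 := by
          calc t ^ 2 ≤ |Y j ω| ^ 2 := pow_le_pow_left₀ ht0.le habs 2
            _ = (Y j ω) ^ 2 := sq_abs _
        have hYk : (Y j ω) ^ 2 * (t ^ 2) ^ (k - 1) ≤ (Y j ω) ^ (2 * k) := by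
          have hlt : (t ^ 2) ^ (k - 1) ≤ ((Y j ω) ^ 2) ^ (k - 1) :=
            pow_le_pow_left₀ (by positivity) h2 _
          calc (Y j ω) ^ 2 * (t ^ 2) ^ (k - 1)
              ≤ (Y j ω) ^ 2 * ((Y j ω) ^ 2) ^ (k - 1) :=
                mul_le_mul_of_nonneg_left hlt (sq_nonneg _)
            _ = (Y j ω) ^ (2 * k) := by
                rw [← pow_succ', ← pow_mul]
                congr 1
                omega
        have ht2pos : (0:ℝ) < (t ^ 2) ^ (k - 1) := by positivity
        have hcinv : c = ((t ^ 2) ^ (k - 1))⁻¹ := by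
          rw [hcdef, ht2, ← inv_pow, inv_div]
        rw [hcinv]
        rw [← le_div_iff₀ ht2pos] at hYk
        rwa [div_eq_inv_mul] at hYk
      have h1 : ∫ ω in {ω | t ≤ |Y j ω|}, (Y j ω) ^ 2 ∂μ
          ≤ ∫ ω in {ω | t ≤ |Y j ω|}, c * (Y j ω) ^ (2 * k) ∂μ :=
        setIntegral_mono_on (hint2 j).integrableOn
          ((hint2k j).const_mul c).integrableOn (hIset j) key
      have h2 : ∫ ω in {ω | t ≤ |Y j ω|}, c * (Y j ω) ^ (2 * k) ∂μ
          ≤ ∫ ω, c * (Y j ω) ^ (2 * k) ∂μ :=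
        setIntegral_le_integral ((hint2k j).const_mul c)
          (ae_of_all _ fun ω => mul_nonneg hc0.le (hpow2k _))
      have h3 : ∫ ω, c * (Y j ω) ^ (2 * k) ∂μ = c * ((v j : ℝ) ^ k * Ck) := by
        rw [integral_const_mul, my_comp_integral (hmeas j) k (hgauss j),
          my_gauss_moment _ k hk0]
      rw [h3] at h2
      exact le_trans h1 h2
    -- bounding sequence
    set E : ℝ := K * p ^ (k - m) with hEdef
    have hE0 : 0 ≤ E := by positivity
    set b : ℕ → ℝ := fun j =>
      (if j < N then p * (C1 * (v j : ℝ)) else 0) + E * r ^ j with hbdef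
    have hterm : ∀ j,
        (1 - p) ^ j * p * (∫ ω in {ω | t ≤ |Y j ω|}, (Y j ω) ^ 2 ∂μ) ≤ b j := by
      intro j
      by_cases hjN : j < N
      · have h1 : (1 - p) ^ j * p * (∫ ω in {ω | t ≤ |Y j ω|}, (Y j ω) ^ 2 ∂μ)
            ≤ 1 * p * (C1 * (v j : ℝ)) := by
          apply mul_le_mul
          · apply mul_le_mul_of_nonneg_right _ hp0.le
            exact pow_le_one₀ hp1' (by linarith)
          · exact hIb1 j
          · exact hInn j
          · positivity
        rw [one_mul] at h1
        have h2 : (0:ℝ) ≤ E * r ^ j := mul_nonneg hE0 (pow_nonneg hr0.le j)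
        simp only [hbdef, if_pos hjN]
        linarith
      · push_neg at hjN
        have hrr : (1 - p) ^ j ≤ r ^ j * r ^ j := by
          rw [← mul_pow]
          apply pow_le_pow_left₀ hp1' _ j
          rw [hrdef, ← Real.exp_add]
          have := Real.add_one_le_exp (-p)
          have heq : -(p/2) + -(p/2) = -p := by ring
          rw [heq]
          linarith
        have hIb : (∫ ω in {ω | t ≤ |Y j ω|}, (Y j ω) ^ 2 ∂μ)
            ≤ (p / ε ^ 2) ^ (k - 1) * ((j:ℝ) ^ m * Ck) := by
          refine le_trans (hIbk j) ?_
          apply mul_le_mul_of_nonneg_left _ (by positivity)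
          exact mul_le_mul_of_nonneg_right (hvN j hjN) hCk
        -- exponential-polynomial bound
        have hjm : r ^ j * (j:ℝ) ^ m ≤ D / p ^ m := by
          have hexp : r ^ j = Real.exp (-(p * j / 2)) := by
            rw [hrdef, ← Real.exp_nat_mul]
            congr 1
            ring
          have hfac : (p * j / 2) ^ m / (m.factorial : ℝ) ≤ Real.exp (p * j / 2) :=
            Real.pow_div_factorial_le_exp (x := p * (j:ℝ) / 2) (by positivity) m
          have hjp : (j:ℝ) ^ m * p ^ m ≤ D * Real.exp (p * j / 2) := by
            have h1 : (p * j / 2) ^ m ≤ (m.factorial : ℝ) * Real.exp (p * j / 2) := by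
              rw [div_le_iff₀ (by positivity : (0:ℝ) < (m.factorial : ℝ))] at hfac
              linarith
            have h2 : ((j:ℝ)) ^ m * p ^ m = (p * j / 2) ^ m * 2 ^ m := by
              rw [← mul_pow, ← mul_pow]
              congr 1
              ring
            rw [h2, hDdef]
            calc (p * (j:ℝ) / 2) ^ m * 2 ^ m
                ≤ ((m.factorial : ℝ) * Real.exp (p * j / 2)) * 2 ^ m :=
                  mul_le_mul_of_nonneg_right h1 (by positivity)
              _ = (m.factorial : ℝ) * 2 ^ m * Real.exp (p * j / 2) := by ring
          have hmul : Real.exp (-(p * j / 2)) * Real.exp (p * j / 2) = 1 := by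
            rw [← Real.exp_add]; simp
          rw [hexp, le_div_iff₀ (pow_pos hp0 m)]
          calc Real.exp (-(p * j / 2)) * (j:ℝ) ^ m * p ^ m
              = Real.exp (-(p * j / 2)) * ((j:ℝ) ^ m * p ^ m) := by ring
            _ ≤ Real.exp (-(p * j / 2)) * (D * Real.exp (p * j / 2)) :=
                mul_le_mul_of_nonneg_left hjp (Real.exp_pos _).le
            _ = D * (Real.exp (-(p * j / 2)) * Real.exp (p * j / 2)) := by ring
            _ = D := by rw [hmul, mul_one]
        have hpe : p * (p / ε ^ 2) ^ (k - 1) = p ^ k / εp := by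
          have hk1 : p ^ k = p ^ (k - 1) * p := by
            rw [← pow_succ]
            congr 1
            omega
          rw [div_pow, hεpdef, ← pow_mul, hk1]
          ring
        have hppow : p ^ k = p ^ (k - m) * p ^ m := by
          rw [← pow_add]
          congr 1
          omega
        calc (1 - p) ^ j * p * (∫ ω in {ω | t ≤ |Y j ω|}, (Y j ω) ^ 2 ∂μ)
            ≤ (r ^ j * r ^ j) * p * ((p / ε ^ 2) ^ (k - 1) * ((j:ℝ) ^ m * Ck)) := by
              apply mul_le_mul
              · exact mul_le_mul_of_nonneg_right hrr hp0.le
              · exact hIb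
              · exact hInn j
              · positivity
          _ = (r ^ j * (j:ℝ) ^ m) * (Ck * (p * (p / ε ^ 2) ^ (k - 1))) * r ^ j := by
              ring
          _ ≤ (D / p ^ m) * (Ck * (p ^ k / εp)) * r ^ j := by
              apply mul_le_mul_of_nonneg_right _ (pow_nonneg hr0.le j)
              apply mul_le_mul hjm (le_of_eq (by rw [hpe])) (by positivity) (by positivity)
          _ = E * r ^ j := by
              rw [hEdef, hKdef, hppow]
              field_simp
          _ ≤ b j := by
              simp only [hbdef]
              split
              · have h2 : (0:ℝ) ≤ p * (C1 * (v j : ℝ)) := by positivity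
                linarith
              · simp
    -- summability
    have hbsum1 : Summable (fun j => if j < N then p * (C1 * (v j : ℝ)) else 0) := by
      apply summable_of_ne_finset_zero (s := Finset.range N)
      intro j hj
      rw [Finset.mem_range] at hj
      rw [if_neg hj]
    have hgeomsum : Summable (fun j : ℕ => E * r ^ j) :=
      (summable_geometric_of_lt_one hr0.le hr1).mul_left E
    have hbsum : Summable b := hbsum1.add hgeomsum
    have htermsum : Summable (fun j =>
        (1 - p) ^ j * p * (∫ ω in {ω | t ≤ |Y j ω|}, (Y j ω) ^ 2 ∂μ)) := by
      apply Summable.of_nonneg_of_le _ hterm hbsum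
      intro j
      exact mul_nonneg (mul_nonneg (pow_nonneg hp1' j) hp0.le) (hInn j)
    -- the tsum bound
    have hr4 : (1 - r)⁻¹ ≤ 4 / p := by
      have h2 : (0:ℝ) < 1 + p / 2 := by linarith
      have hrle : r ≤ (1 + p / 2)⁻¹ := by
        rw [hrdef, Real.exp_neg]
        apply inv_anti₀ h2
        have := Real.add_one_le_exp (p / 2)
        linarith
      have h14 : (1 + p / 2)⁻¹ ≤ 1 - p / 4 := by
        rw [inv_le_iff_one_le_mul₀ h2]
        nlinarith
      have hlow : p / 4 ≤ 1 - r := by linarith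
      have h4 : (0:ℝ) < p / 4 := by linarith
      calc (1 - r)⁻¹ ≤ (p / 4)⁻¹ := inv_anti₀ h4 hlow
        _ = 4 / p := by rw [inv_div]
    have hq1 : 1 ≤ k - m - 1 := by omega
    have hpkm : p ^ (k - m - 1) ≤ p := by
      calc p ^ (k - m - 1) ≤ p ^ 1 := pow_le_pow_of_le_one hp0.le hp1.le hq1
        _ = p := pow_one p
    calc (∑' j : ℕ, (1 - p) ^ j * p *
          (∫ ω in {ω | t ≤ |Y j ω|}, (Y j ω) ^ 2 ∂μ))
        ≤ ∑' j : ℕ, b j := Summable.tsum_le_tsum hterm htermsum hbsum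
      _ = (∑ j ∈ Finset.range N, p * (C1 * (v j : ℝ))) + E * (1 - r)⁻¹ := by
          rw [hbdef, Summable.tsum_add hbsum1 hgeomsum, tsum_mul_left,
            tsum_geometric_of_lt_one hr0.le hr1]
          congr 1
          rw [tsum_eq_sum (s := Finset.range N)]
          · apply Finset.sum_congr rfl
            intro j hj
            rw [Finset.mem_range] at hj
            rw [if_pos hj]
          · intro j hj
            rw [Finset.mem_range] at hj
            rw [if_neg hj]
      _ ≤ A0 * p := by
          have hsum_eq : (∑ j ∈ Finset.range N, p * (C1 * (v j : ℝ)))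
              = (C1 * ∑ j ∈ Finset.range N, (v j : ℝ)) * p := by
            rw [Finset.mul_sum, Finset.sum_mul]
            exact Finset.sum_congr rfl fun j _ => by ring
          have hE4 : E * (1 - r)⁻¹ ≤ 4 * K * p := by
            have h1 : E * (1 - r)⁻¹ ≤ E * (4 / p) := by
              apply mul_le_mul_of_nonneg_left hr4 hE0
            have h2 : E * (4 / p) = 4 * K * p ^ (k - m - 1) := by
              rw [hEdef, show k - m = (k - m - 1) + 1 by omega, pow_succ, Nat.add_sub_cancel]
              field_simp
            have h3 : 4 * K * p ^ (k - m - 1) ≤ 4 * K * p :=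
              mul_le_mul_of_nonneg_left hpkm (by positivity)
            linarith
          calc (∑ j ∈ Finset.range N, p * (C1 * (v j : ℝ))) + E * (1 - r)⁻¹
              ≤ (C1 * ∑ j ∈ Finset.range N, (v j : ℝ)) * p + 4 * K * p := by
                rw [hsum_eq]
                exact add_le_add le_rfl hE4
            _ = A0 * p := by rw [hA0def]; ring
  · -- tendsto of the bound
    have hcont : Continuous (fun p : ℝ => A0 * p) := continuous_const.mul continuous_id
    have h0 : Tendsto (fun p : ℝ => A0 * p) (nhds 0) (nhds (A0 * 0)) := hcont.tendsto 0
    rw [mul_zero] at h0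
    exact h0.mono_left nhdsWithin_le_nhds
end

section
/- Let {z_n} be a sequence of complex numbers with lim_{n→∞} z_n = z, where Re z > −1. Then lim_{p→0⁺} Σ_{n=1}^∞ (1−p)^{n−1} p · e^{−p n z_n} = 1/(1+z); in particular, for each sufficiently small p ∈ (0,1) the series converges absolutely. -/
open Filter Set

lemma exp_diff_bound (a b : ℂ) (C : ℝ) (ha : a.re ≤ C) (hb : b.re ≤ C) :
    ‖Complex.exp a - Complex.exp b‖ ≤ Real.exp C * ‖a - b‖ := by
  have hconv : Convex ℝ {w : ℂ | w.re ≤ C} := convex_halfSpace_re_le C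
  exact hconv.norm_image_sub_le_of_norm_hasFDerivWithin_le
    (f' := fun w => ContinuousLinearMap.smulRight (1 : ℂ →L[ℂ] ℂ) (Complex.exp w))
    (fun w _ => (Complex.hasDerivAt_exp w).hasFDerivAt.hasFDerivWithinAt)
    (fun w hw => by
      rw [ContinuousLinearMap.norm_smulRight_apply]
      simp only [ContinuousLinearMap.one_def, ContinuousLinearMap.norm_id, one_mul, Complex.norm_exp]
      exact Real.exp_le_exp.2 hw)
    hb ha

lemma geom_aux (p c : ℝ) (hp : 0 < p) (hp1 : p < 1) (hc : c < 1) :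
    (1 - p) * Real.exp (p * c) < 1 := by
  have h1 : (1 - p : ℝ) < Real.exp (-p) := by
    have := Real.add_one_lt_exp (x := -p) (by linarith)
    linarith
  calc (1 - p) * Real.exp (p * c) < Real.exp (-p) * Real.exp (p * c) := by
        apply mul_lt_mul_of_pos_right h1 (Real.exp_pos _)
    _ = Real.exp (p * (c - 1)) := by rw [← Real.exp_add]; ring_nf
    _ < 1 := Real.exp_lt_one_iff.2 (by nlinarith)

noncomputable def trm (z : ℕ → ℂ) (p : ℝ) (n : ℕ) : ℂ :=
  ((1 - p : ℝ) : ℂ) ^ n * (p : ℂ) * Complex.exp (-(p * (n + 1) : ℝ) * z (n + 1))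

lemma norm_trm (z : ℕ → ℂ) {p : ℝ} (hp : 0 < p) (hp1 : p < 1) (n : ℕ) :
    ‖trm z p n‖ = (1 - p) ^ n * p * Real.exp (-(p * (n + 1)) * (z (n + 1)).re) := by
  unfold trm
  rw [norm_mul, norm_mul, norm_pow, Complex.norm_real, Complex.norm_real,
    Real.norm_eq_abs, Real.norm_eq_abs, abs_of_nonneg (by linarith : (0:ℝ) ≤ 1 - p),
    abs_of_pos hp, Complex.norm_exp, ← Complex.ofReal_neg,
    Complex.re_ofReal_mul]

lemma summable_norm_trm (z : ℕ → ℂ) {δ p : ℝ} (hδ : 0 < δ) (hp : 0 < p) (hp1 : p < 1)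
    (N₀ : ℕ) (hre : ∀ m, N₀ ≤ m → -1 + δ ≤ (z m).re) :
    Summable fun n : ℕ => ‖trm z p n‖ := by
  have hr0 : 0 ≤ (1 - p) * Real.exp (p * (1 - δ)) :=
    mul_nonneg (by linarith) (Real.exp_pos _).le
  have hr1 : (1 - p) * Real.exp (p * (1 - δ)) < 1 := geom_aux p (1 - δ) hp hp1 (by linarith)
  set r := (1 - p) * Real.exp (p * (1 - δ)) with hr
  rw [← summable_nat_add_iff N₀]
  refine Summable.of_nonneg_of_le (fun n => norm_nonneg _) ?_
    ((summable_geometric_of_lt_one hr0 hr1).mul_left (p * Real.exp (p * (1 - δ))))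
  intro n
  rw [norm_trm z hp hp1]
  set k := n + N₀ with hk
  have hknn : -1 + δ ≤ (z (k + 1)).re := hre _ (by omega)
  have hx : (0:ℝ) ≤ p * ((k : ℝ) + 1) := by positivity
  calc (1 - p) ^ k * p * Real.exp (-(p * ((k:ℝ) + 1)) * (z (k + 1)).re)
      ≤ (1 - p) ^ k * p * Real.exp (p * ((k:ℝ) + 1) * (1 - δ)) := by
        apply mul_le_mul_of_nonneg_left _ (mul_nonneg (pow_nonneg (by linarith) k) hp.le)
        apply Real.exp_le_exp.2
        nlinarith [mul_nonneg hx (by linarith : (0:ℝ) ≤ 1 - δ + (z (k+1)).re)]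
    _ = (p * Real.exp (p * (1 - δ))) * r ^ k := by
        have h1 : p * ((k:ℝ) + 1) * (1 - δ) = ((k + 1 : ℕ) : ℝ) * (p * (1 - δ)) := by
          push_cast; ring
        rw [h1, Real.exp_nat_mul, hr, mul_pow, pow_succ]
        ring
    _ ≤ (p * Real.exp (p * (1 - δ))) * r ^ n := by
        apply mul_le_mul_of_nonneg_left _ (by positivity)
        rw [hk, pow_add]
        have : r ^ N₀ ≤ 1 := pow_le_one₀ hr0 hr1.le
        nlinarith [pow_nonneg hr0 n, pow_nonneg hr0 N₀]

lemma tsum_trm_const (L : ℂ) {p : ℝ} (hp : 0 < p) (hp1 : p < 1) (hL : -1 < L.re) :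
    ∑' n : ℕ, trm (fun _ => L) p n
      = (p : ℂ) * Complex.exp (-(p : ℂ) * L) *
        (1 - ((1 - p : ℝ) : ℂ) * Complex.exp (-(p : ℂ) * L))⁻¹ := by
  have hw : ‖((1 - p : ℝ) : ℂ) * Complex.exp (-(p : ℂ) * L)‖ < 1 := by
    rw [norm_mul, Complex.norm_real, Real.norm_eq_abs, abs_of_nonneg (by linarith : (0:ℝ) ≤ 1 - p),
      Complex.norm_exp,
      show (-(p : ℂ) * L).re = p * (-L.re) by
        rw [show -(p:ℂ) = ((-p : ℝ) : ℂ) by push_cast; ring, Complex.re_ofReal_mul]; ring]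
    exact geom_aux p (-L.re) hp hp1 (by linarith)
  calc ∑' n : ℕ, trm (fun _ => L) p n
      = ∑' n : ℕ, ((p:ℂ) * Complex.exp (-(p:ℂ) * L)) *
          (((1 - p : ℝ) : ℂ) * Complex.exp (-(p:ℂ) * L)) ^ n := by
        apply tsum_congr; intro n
        unfold trm
        have h1 : -(↑(p * ((n:ℝ) + 1)) : ℂ) * L = ((n + 1 : ℕ) : ℂ) * (-(p:ℂ) * L) := by
          push_cast; ring
        rw [h1, Complex.exp_nat_mul, pow_succ, mul_pow]
        ring
    _ = (p : ℂ) * Complex.exp (-(p : ℂ) * L) *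
        (1 - ((1 - p : ℝ) : ℂ) * Complex.exp (-(p : ℂ) * L))⁻¹ := by
        rw [tsum_mul_left, tsum_geometric_of_norm_lt_one hw]

lemma tendsto_Tcl (L : ℂ) (hL : -1 < L.re) :
    Tendsto (fun p : ℝ => (p : ℂ) * Complex.exp (-(p:ℂ) * L) *
        (1 - ((1 - p : ℝ) : ℂ) * Complex.exp (-(p:ℂ) * L))⁻¹)
      (nhdsWithin 0 (Set.Ioi 0)) (nhds (1 / (1 + L))) := by
  have h1L : (1 + L) ≠ 0 := by
    intro h
    have := congrArg Complex.re h
    simp at this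
    linarith
  set g : ℝ → ℂ := fun q => 1 - ((1 - q : ℝ) : ℂ) * Complex.exp (-(q:ℂ) * L) with hg
  have hq : HasDerivAt (fun q : ℝ => (q : ℂ)) 1 0 := by
    exact Complex.ofRealCLM.hasDerivAt (x := (0:ℝ))
  have h2 : HasDerivAt (fun q : ℝ => -(q:ℂ) * L) (-L) 0 := by
    simpa using (hq.neg.mul_const L)
  have h3 : HasDerivAt (fun q : ℝ => Complex.exp (-(q:ℂ) * L)) (-L) 0 := by
    simpa using h2.cexp
  have h4 : HasDerivAt (fun q : ℝ => ((1 - q : ℝ) : ℂ)) (-1) 0 := by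
    have : (fun q : ℝ => ((1 - q : ℝ) : ℂ)) = fun q : ℝ => 1 - (q : ℂ) := by
      funext q; push_cast; ring
    rw [this]
    exact ((hasDerivAt_const (0:ℝ) (1:ℂ)).sub hq).congr_deriv (by norm_num)
  have h5 := h4.mul h3
  have hder : HasDerivAt g (1 + L) 0 := by
    have h6 := (hasDerivAt_const (0:ℝ) (1:ℂ)).sub h5
    convert h6 using 1
    · rfl
    · rfl
    simp
    ring
  have hslope : Tendsto (fun p : ℝ => (p:ℂ)⁻¹ * g p) (nhdsWithin 0 (Set.Ioi 0)) (nhds (1 + L)) := by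
    have hs := hasDerivAt_iff_tendsto_slope.mp hder
    have hmono : nhdsWithin (0:ℝ) (Set.Ioi 0) ≤ nhdsWithin 0 {(0:ℝ)}ᶜ :=
      nhdsWithin_mono _ (fun x hx => ne_of_gt hx)
    refine (hs.mono_left hmono).congr (fun p => ?_)
    have hg0 : g 0 = 0 := by simp [hg]
    rw [slope_def_module, hg0, sub_zero, sub_zero, Complex.real_smul, Complex.ofReal_inv]
  have hexp : Tendsto (fun p : ℝ => Complex.exp (-(p:ℂ) * L)) (nhdsWithin 0 (Set.Ioi 0))
      (nhds 1) := by
    have hc : Continuous (fun p : ℝ => Complex.exp (-(p:ℂ) * L)) := by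
      continuity
    have := hc.tendsto 0
    simp only [Complex.ofReal_zero, neg_zero, zero_mul, Complex.exp_zero] at this
    exact this.mono_left nhdsWithin_le_nhds
  have hmain := hexp.mul ((hslope.inv₀ h1L))
  rw [one_mul] at hmain
  rw [show (1:ℂ)/(1+L) = (1+L)⁻¹ by rw [one_div]]
  refine hmain.congr' ?_
  filter_upwards [self_mem_nhdsWithin] with p (hp : (0:ℝ) < p)
  have hpne : (p : ℂ) ≠ 0 := by exact_mod_cast hp.ne'
  simp only [hg]
  rw [mul_inv, inv_inv]
  ring

lemma norm_trm_le_head (z : ℕ → ℂ) {p M : ℝ} (hp : 0 < p) (hp1 : p < 1)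
    (hM : ∀ m, |(z m).re| ≤ M) {i N : ℕ} (hi : i < N) :
    ‖trm z p i‖ ≤ p * Real.exp (N * M) := by
  rw [norm_trm z hp hp1]
  have h0 : (0:ℝ) ≤ M := (abs_nonneg _).trans (hM 0)
  have h1 : (1 - p) ^ i ≤ 1 := pow_le_one₀ (by linarith) (by linarith)
  have hpow : (0:ℝ) ≤ (1 - p) ^ i := pow_nonneg (by linarith) i
  have hiN : ((i:ℝ) + 1) ≤ (N:ℝ) := by exact_mod_cast Nat.succ_le_of_lt hi
  have h2 : -(p * ((i:ℝ) + 1)) * (z (i + 1)).re ≤ (N:ℝ) * M := by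
    have hx : (0:ℝ) ≤ p * ((i:ℝ) + 1) := by positivity
    have habs := hM (i + 1)
    have hstep : -(p * ((i:ℝ) + 1)) * (z (i + 1)).re ≤ (p * ((i:ℝ) + 1)) * M := by
      nlinarith [neg_abs_le ((z (i + 1)).re)]
    have t1 : p * ((i:ℝ) + 1) ≤ (i:ℝ) + 1 := by nlinarith
    have hstep2 : (p * ((i:ℝ) + 1)) * M ≤ (N:ℝ) * M := by
      nlinarith [mul_le_mul_of_nonneg_right t1 h0, mul_le_mul_of_nonneg_right hiN h0]
    linarith
  calc (1 - p) ^ i * p * Real.exp (-(p * ((i:ℝ) + 1)) * (z (i + 1)).re)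
      ≤ 1 * p * Real.exp ((N:ℝ) * M) := by
        apply mul_le_mul (by nlinarith) (Real.exp_le_exp.2 h2) (Real.exp_pos _).le (by positivity)
    _ = p * Real.exp ((N:ℝ) * M) := by ring

set_option maxHeartbeats 2000000 in
/-- Lemma A.3 of the paper.  Let `z n` (for `n = 1, 2, ...`, here written
`z (n+1)` with `n : ℕ`) be complex numbers converging to `L` with `Re L > −1`.  Then the series
`∑_{n=1}^∞ (1−p)^{n−1} p e^{−p n z_n}` converges absolutely for every sufficiently small
`p > 0`, and it tends to `1/(1+L)` as `p → 0⁺`. -/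
theorem stmt_10 (z : ℕ → ℂ) (L : ℂ) (hz : Tendsto z atTop (nhds L)) (hL : -1 < L.re) :
    (∀ᶠ p : ℝ in nhdsWithin 0 (Set.Ioi 0),
      Summable (fun n : ℕ =>
        ‖((1 - p : ℝ) : ℂ) ^ n * (p : ℂ) *
          Complex.exp (-(p * (n + 1) : ℝ) * z (n + 1))‖)) ∧
    Tendsto
      (fun p : ℝ => ∑' n : ℕ,
        ((1 - p : ℝ) : ℂ) ^ n * (p : ℂ) * Complex.exp (-(p * (n + 1) : ℝ) * z (n + 1)))
      (nhdsWithin 0 (Set.Ioi 0)) (nhds (1 / (1 + L))) := by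
  set δ : ℝ := (1 + L.re) / 2 with hδdef
  have hδ : 0 < δ := by rw [hδdef]; linarith
  have hLδ : -1 + δ ≤ L.re := by rw [hδdef]; linarith
  have hre_ev : ∀ᶠ m in atTop, -1 + δ < (z m).re := by
    have hcont : Tendsto (fun m => (z m).re) atTop (nhds L.re) :=
      (Complex.continuous_re.tendsto L).comp hz
    exact hcont.eventually (eventually_gt_nhds (by rw [hδdef]; linarith))
  obtain ⟨N₀, hN₀⟩ := eventually_atTop.mp hre_ev
  have hre : ∀ m, N₀ ≤ m → -1 + δ ≤ (z m).re := fun m hm => (hN₀ m hm).le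
  have hreL : ∀ m : ℕ, (0:ℕ) ≤ m → -1 + δ ≤ ((fun _ : ℕ => L) m).re := fun m _ => hLδ
  obtain ⟨M₀, hM₀⟩ := hz.norm.bddAbove_range
  set M := max M₀ ‖L‖ with hM
  have hzM : ∀ m, |(z m).re| ≤ M := fun m =>
    le_trans (Complex.abs_re_le_norm _)
      (le_trans (hM₀ ⟨m, rfl⟩) (le_max_left _ _))
  have hLM : ∀ m : ℕ, |((fun _ : ℕ => L) m).re| ≤ M := fun m =>
    le_trans (Complex.abs_re_le_norm _) (le_max_right _ _)
  constructor
  · filter_upwards [Ioo_mem_nhdsGT_of_mem (left_mem_Ico.2 one_pos)] with p hp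
    have h := summable_norm_trm z hδ hp.1 hp.2 N₀ hre
    simp only [trm] at h
    exact h
  · have hT := tendsto_Tcl L hL
    set Tcl : ℝ → ℂ := fun p => (p : ℂ) * Complex.exp (-(p:ℂ) * L) *
        (1 - ((1 - p : ℝ) : ℂ) * Complex.exp (-(p:ℂ) * L))⁻¹ with hTcldef
    have hE : Tendsto (fun p : ℝ => (∑' n, trm z p n) - Tcl p)
        (nhdsWithin 0 (Set.Ioi 0)) (nhds 0) := by
      rw [NormedAddCommGroup.tendsto_nhds_zero]
      intro ε hε
      set ε₁ := ε * δ ^ 2 / 48 with hε₁def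
      have hε₁ : 0 < ε₁ := by rw [hε₁def]; positivity
      obtain ⟨N₁, hN₁⟩ := Metric.tendsto_atTop.mp hz ε₁ hε₁
      set N := max N₀ N₁ with hNdef
      set E := Real.exp ((N:ℝ) * M) with hEdef
      have hE0 : (0:ℝ) < E := Real.exp_pos _
      set c₁ := ε / (8 * ((N:ℝ) + 1) * E) with hc₁def
      have hc₁0 : 0 < c₁ := by rw [hc₁def]; positivity
      set p₀ := min (1/2 : ℝ) (min c₁ (1/(δ+1))) with hp₀def
      have hp₀0 : 0 < p₀ := by
        rw [hp₀def, lt_min_iff, lt_min_iff]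
        refine ⟨by norm_num, hc₁0, by positivity⟩
      filter_upwards [Ioo_mem_nhdsGT_of_mem (left_mem_Ico.2 hp₀0)] with p hp
      obtain ⟨hp0, hpp₀⟩ := hp
      have hphalf : p < 1/2 := lt_of_lt_of_le hpp₀ (by rw [hp₀def]; exact min_le_left _ _)
      have hp1 : p < 1 := by linarith
      have hpc₁ : p < c₁ := lt_of_lt_of_le hpp₀
        (by rw [hp₀def]; exact (min_le_right _ _).trans (min_le_left _ _))
      have hpδ' : p < 1/(δ+1) := lt_of_lt_of_le hpp₀
        (by rw [hp₀def]; exact (min_le_right _ _).trans (min_le_right _ _))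
      have hpδ : p * δ ≤ 1 := by
        have h1 : p * (δ + 1) < 1 := by
          rw [lt_div_iff₀ (by linarith)] at hpδ'
          linarith
        nlinarith
      -- summability facts
      have Sz := summable_norm_trm z hδ hp0 hp1 N₀ hre
      have SL := summable_norm_trm (fun _ => L) hδ hp0 hp1 0 hreL
      have hdiff : Summable fun n => ‖trm z p n - trm (fun _ => L) p n‖ :=
        (Sz.add SL).of_nonneg_of_le (fun n => norm_nonneg _) (fun n => norm_sub_le _ _)
      -- geometric ratio facts
      have hr0 : 0 ≤ (1 - p) * Real.exp (p * (1 - δ)) :=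
        mul_nonneg (by linarith) (Real.exp_pos _).le
      have hr1 : (1 - p) * Real.exp (p * (1 - δ)) < 1 := geom_aux p (1 - δ) hp0 hp1 (by linarith)
      set r := (1 - p) * Real.exp (p * (1 - δ)) with hrdef
      have hrle : r ≤ 1 - p * δ / 2 := by
        have e1 : 1 - p ≤ Real.exp (-p) := by
          have := Real.add_one_le_exp (-p); linarith
        have e2 : r ≤ Real.exp (-p) * Real.exp (p * (1 - δ)) :=
          mul_le_mul_of_nonneg_right e1 (Real.exp_pos _).le
        have e3 : Real.exp (-p) * Real.exp (p * (1 - δ)) = Real.exp (-(p * δ)) := by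
          rw [← Real.exp_add]; ring_nf
        have e4 : 1 + p * δ ≤ Real.exp (p * δ) := by
          have := Real.add_one_le_exp (p * δ); linarith
        have e5 : Real.exp (-(p * δ)) ≤ (1 + p * δ)⁻¹ := by
          rw [Real.exp_neg]
          exact inv_anti₀ (by positivity) e4
        have e6 : (1 + p * δ)⁻¹ ≤ 1 - p * δ / 2 := by
          have h1 : (0:ℝ) < 1 + p * δ := by positivity
          have h2 : (1:ℝ) ≤ (1 - p * δ / 2) * (1 + p * δ) := by
            nlinarith [mul_nonneg (mul_nonneg hp0.le hδ.le) (by linarith : (0:ℝ) ≤ 1 - p * δ)]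
          rw [← one_div, div_le_iff₀ h1]
          linarith
        linarith [e2.trans (e3.le.trans (e5.trans e6))]
      have h1r : p * δ / 2 ≤ 1 - r := by linarith
      have hpδ2 : (0:ℝ) < p * δ / 2 := by positivity
      -- tail per-term bound
      set g : ℕ → ℝ := fun m => (3 * ε₁ * p ^ 2) * (((m:ℝ) + 1) * r ^ m) with hgdef
      have hrnorm : ‖r‖ < 1 := by rwa [Real.norm_eq_abs, abs_of_nonneg hr0]
      have hsum1 : Summable (fun m : ℕ => ((m:ℝ) + 1) * r ^ m) := by
        have h := (summable_pow_mul_geometric_of_norm_lt_one 1 hrnorm).add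
          (summable_geometric_of_lt_one hr0 hr1)
        refine h.congr fun m => ?_
        simp [pow_one]; ring
      have hgsum : Summable g := hsum1.mul_left _
      have hval : ∑' m : ℕ, ((m:ℝ) + 1) * r ^ m = ((1 - r) ^ 2)⁻¹ := by
        have hne : (1:ℝ) - r ≠ 0 := by linarith
        have h1 : ∑' m : ℕ, ((m:ℝ) + 1) * r ^ m
            = (∑' m : ℕ, (m:ℝ) * r ^ m) + ∑' m : ℕ, r ^ m := by
          rw [← Summable.tsum_add (by simpa [pow_one] using
            summable_pow_mul_geometric_of_norm_lt_one 1 hrnorm)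
            (summable_geometric_of_lt_one hr0 hr1)]
          exact tsum_congr fun m => by ring
        rw [h1, tsum_coe_mul_geometric_of_norm_lt_one hrnorm,
          tsum_geometric_of_norm_lt_one hrnorm]
        field_simp
        ring
      have htt : ∀ n : ℕ, ‖trm z p (n + N) - trm (fun _ => L) p (n + N)‖ ≤ g (n + N) := by
        intro n
        set m := n + N with hmdef
        have hmN₀ : N₀ ≤ m + 1 := by omega
        have hmN₁ : N₁ ≤ m + 1 := by omega
        set x := p * ((m:ℝ) + 1) with hxdef
        have hx0 : 0 ≤ x := by rw [hxdef]; positivity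
        set A := -(↑x : ℂ) * z (m + 1) with hAdef
        set B := -(↑x : ℂ) * L with hBdef
        have hre_eq : ∀ w : ℂ, (-(↑x : ℂ) * w).re = -x * w.re := by
          intro w
          rw [show -(↑x : ℂ) = ((-x : ℝ) : ℂ) by push_cast; ring, Complex.re_ofReal_mul]
        have hAre : A.re ≤ x * (1 - δ) := by
          rw [hAdef, hre_eq]
          have := hre (m + 1) hmN₀
          nlinarith [mul_nonneg hx0 (by linarith : (0:ℝ) ≤ 1 - δ + (z (m+1)).re)]
        have hBre : B.re ≤ x * (1 - δ) := by
          rw [hBdef, hre_eq]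
          nlinarith [mul_nonneg hx0 (by linarith : (0:ℝ) ≤ 1 - δ + L.re)]
        have hABdist : ‖A - B‖ ≤ x * ε₁ := by
          have : A - B = -(↑x : ℂ) * (z (m + 1) - L) := by rw [hAdef, hBdef]; ring
          rw [this, norm_mul, norm_neg, Complex.norm_real, Real.norm_eq_abs,
            abs_of_nonneg hx0]
          have hd := hN₁ (m + 1) hmN₁
          rw [dist_eq_norm] at hd
          exact mul_le_mul_of_nonneg_left hd.le hx0
        have hexp_diff : ‖Complex.exp A - Complex.exp B‖ ≤ Real.exp (x * (1 - δ)) * (x * ε₁) := by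
          calc ‖Complex.exp A - Complex.exp B‖
              ≤ Real.exp (x * (1 - δ)) * ‖A - B‖ := exp_diff_bound A B _ hAre hBre
            _ ≤ Real.exp (x * (1 - δ)) * (x * ε₁) :=
                mul_le_mul_of_nonneg_left hABdist (Real.exp_pos _).le
        have hkey : trm z p m - trm (fun _ => L) p m
            = ((1 - p : ℝ) : ℂ) ^ m * (p : ℂ) * (Complex.exp A - Complex.exp B) := by
          simp only [trm, hAdef, hBdef, hxdef]
          push_cast
          ring
        rw [hkey, norm_mul, norm_mul, norm_pow, Complex.norm_real, Complex.norm_real,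
          Real.norm_eq_abs, Real.norm_eq_abs, abs_of_nonneg (by linarith : (0:ℝ) ≤ 1 - p),
          abs_of_pos hp0]
        have hfact : Real.exp (x * (1 - δ)) = Real.exp (p * (1 - δ)) ^ (m + 1) := by
          rw [← Real.exp_nat_mul]
          congr 1
          rw [hxdef]; push_cast; ring
        have hexpfac : Real.exp (p * (1 - δ)) ≤ 3 := by
          have h1 : p * (1 - δ) ≤ 1 := by nlinarith
          calc Real.exp (p * (1 - δ)) ≤ Real.exp 1 := Real.exp_le_exp.2 h1
            _ ≤ 3 := by
                have := Real.exp_one_lt_d9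
                linarith
        calc (1 - p) ^ m * p * ‖Complex.exp A - Complex.exp B‖
            ≤ (1 - p) ^ m * p * (Real.exp (x * (1 - δ)) * (x * ε₁)) := by
              apply mul_le_mul_of_nonneg_left hexp_diff
                (mul_nonneg (pow_nonneg (by linarith) m) hp0.le)
          _ = (ε₁ * p ^ 2 * Real.exp (p * (1 - δ))) * (((m:ℝ) + 1) * r ^ m) := by
              rw [hfact, hrdef, hxdef, mul_pow, pow_succ]
              ring
          _ ≤ g m := by
              have h3 : ε₁ * p ^ 2 * Real.exp (p * (1 - δ)) ≤ 3 * ε₁ * p ^ 2 := by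
                nlinarith [mul_le_mul_of_nonneg_left hexpfac
                  (by positivity : (0:ℝ) ≤ ε₁ * p ^ 2)]
              have hmr : (0:ℝ) ≤ ((m:ℝ) + 1) * r ^ m := by positivity
              calc ε₁ * p ^ 2 * Real.exp (p * (1 - δ)) * (((m:ℝ) + 1) * r ^ m)
                  ≤ 3 * ε₁ * p ^ 2 * (((m:ℝ) + 1) * r ^ m) :=
                    mul_le_mul_of_nonneg_right h3 hmr
                _ = g m := rfl
      -- head bound
      have hhead : ∀ i ∈ Finset.range N,
          ‖trm z p i - trm (fun _ => L) p i‖ ≤ 2 * (p * E) := by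
        intro i hi
        rw [Finset.mem_range] at hi
        have h1 := norm_trm_le_head z hp0 hp1 hzM hi
        have h2 := norm_trm_le_head (fun _ => L) hp0 hp1 hLM hi
        calc ‖trm z p i - trm (fun _ => L) p i‖
            ≤ ‖trm z p i‖ + ‖trm (fun _ => L) p i‖ := norm_sub_le _ _
          _ ≤ 2 * (p * E) := by rw [hEdef]; linarith
      -- assemble
      have hTeq : Tcl p = ∑' n : ℕ, trm (fun _ => L) p n := (tsum_trm_const L hp0 hp1 hL).symm
      have step1 : ‖(∑' n, trm z p n) - Tcl p‖
          = ‖∑' n : ℕ, (trm z p n - trm (fun _ => L) p n)‖ := by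
        rw [hTeq, ← Summable.tsum_sub Sz.of_norm SL.of_norm]
      have step2 : ‖∑' n : ℕ, (trm z p n - trm (fun _ => L) p n)‖
          ≤ ∑' n : ℕ, ‖trm z p n - trm (fun _ => L) p n‖ := norm_tsum_le_tsum_norm hdiff
      have step3 : ∑' n : ℕ, ‖trm z p n - trm (fun _ => L) p n‖
          = (∑ i ∈ Finset.range N, ‖trm z p i - trm (fun _ => L) p i‖)
            + ∑' n : ℕ, ‖trm z p (n + N) - trm (fun _ => L) p (n + N)‖ :=
        (Summable.sum_add_tsum_nat_add N hdiff).symm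
      have hheadsum : (∑ i ∈ Finset.range N, ‖trm z p i - trm (fun _ => L) p i‖)
          ≤ (N:ℝ) * (2 * (p * E)) := by
        have := Finset.sum_le_card_nsmul (Finset.range N) _ _ hhead
        rwa [Finset.card_range, nsmul_eq_mul] at this
      have htailsum : (∑' n : ℕ, ‖trm z p (n + N) - trm (fun _ => L) p (n + N)‖)
          ≤ (3 * ε₁ * p ^ 2) * ((1 - r) ^ 2)⁻¹ := by
        have ht1 : (∑' n : ℕ, ‖trm z p (n + N) - trm (fun _ => L) p (n + N)‖)
            ≤ ∑' n : ℕ, g (n + N) :=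
          Summable.tsum_le_tsum htt ((summable_nat_add_iff N).2 hdiff) ((summable_nat_add_iff N).2 hgsum)
        have ht2 : (∑' n : ℕ, g (n + N)) ≤ ∑' m : ℕ, g m := by
          have heq2 := Summable.sum_add_tsum_nat_add N hgsum
          have hge : (0:ℝ) ≤ ∑ i ∈ Finset.range N, g i :=
            Finset.sum_nonneg fun i _ => by rw [hgdef]; positivity
          linarith
        have ht3 : (∑' m : ℕ, g m) = (3 * ε₁ * p ^ 2) * ((1 - r) ^ 2)⁻¹ := by
          rw [hgdef, tsum_mul_left, hval]
        linarith
      -- numeric bounds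
      have hA : (N:ℝ) * (2 * (p * E)) < ε / 4 := by
        rw [hc₁def, lt_div_iff₀ (by positivity)] at hpc₁
        have hN0 : (0:ℝ) ≤ (N:ℝ) := Nat.cast_nonneg _
        nlinarith
      have hB : (3 * ε₁ * p ^ 2) * ((1 - r) ^ 2)⁻¹ ≤ ε / 4 := by
        have h2 : (p * δ / 2) ^ 2 ≤ (1 - r) ^ 2 := by nlinarith
        have h3 : ((1 - r) ^ 2)⁻¹ ≤ ((p * δ / 2) ^ 2)⁻¹ :=
          inv_anti₀ (by positivity) h2
        have h4 : (3 * ε₁ * p ^ 2) * ((p * δ / 2) ^ 2)⁻¹ = ε / 4 := by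
          rw [hε₁def]
          field_simp
          ring
        have h5 : (0:ℝ) ≤ 3 * ε₁ * p ^ 2 := by positivity
        calc (3 * ε₁ * p ^ 2) * ((1 - r) ^ 2)⁻¹
            ≤ (3 * ε₁ * p ^ 2) * ((p * δ / 2) ^ 2)⁻¹ := mul_le_mul_of_nonneg_left h3 h5
          _ = ε / 4 := h4
      calc ‖(∑' n, trm z p n) - Tcl p‖
          ≤ (∑ i ∈ Finset.range N, ‖trm z p i - trm (fun _ => L) p i‖)
            + ∑' n : ℕ, ‖trm z p (n + N) - trm (fun _ => L) p (n + N)‖ := by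
            rw [step1]; rw [step3] at step2; exact step2
        _ < ε := by linarith
    have hsum := hT.add hE
    rw [add_zero] at hsum
    have heq : (fun p : ℝ => Tcl p + ((∑' n, trm z p n) - Tcl p))
        = fun p : ℝ => ∑' n, trm z p n := by funext p; ring
    rw [heq] at hsum
    simp only [trm] at hsum
    exact hsum
end
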